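/- Let F : Δ_{S×A} → ℝ be differentiable and concave, and define the MFG reward R(·, μ) = ∇F(μ). A policy π is a maximizer of the CURL problem max_π F(μ_π) if and only if π is a Nash equilibrium of this MFG, i.e., its exploitability φ(π) = max_{π'} ⟨μ_{π'}, R(·, μ_π)⟩ − ⟨μ_π, R(·, μ_π)⟩ equals zero. -/

import Mathlib

noncomputable section
open scoped BigOperators

def IsDist {X : Type*} [Fintype X] (p : X → ℝ) : Prop :=
  (∀ x, 0 ≤ p x) ∧ ∑ x, p x = 1

def IsPolicy {S A : Type*} [Fintype A] (π : S → A → ℝ) : Prop :=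
  ∀ s, IsDist (π s)

def IsKernel {S A : Type*} [Fintype S] (P : S → A → S → ℝ) : Prop :=
  ∀ s a, IsDist (P s a)

/-- Probability of (S_t = s, A_t = a) under policy `π`, kernel `P`, initial law `ρ0`. -/
def saDist {S A : Type*} [Fintype S] [Fintype A] (P : S → A → S → ℝ) (π : S → A → ℝ)
    (ρ0 : S → ℝ) : ℕ → S → A → ℝ
  | 0 => fun s a => ρ0 s * π s a
  | (t + 1) => fun s a => π s a * ∑ s' : S, ∑ a' : A, P s' a' s * saDist P π ρ0 t s' a'

/-- Discounted state-action occupancy measure of policy `π`. -/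
def occ {S A : Type*} [Fintype S] [Fintype A] (γ : ℝ) (P : S → A → S → ℝ)
    (π : S → A → ℝ) (ρ0 : S → ℝ) (s : S) (a : A) : ℝ :=
  (1 - γ) * ∑' t : ℕ, γ ^ t * saDist P π ρ0 t s a

/-- The Bellman flow constraint set `M`. -/
def InFlow {S A : Type*} [Fintype S] [Fintype A] (γ : ℝ) (P : S → A → S → ℝ)
    (ρ0 : S → ℝ) (μ : S → A → ℝ) : Prop :=
  IsDist (fun p : S × A => μ p.1 p.2) ∧
  ∀ s, ∑ a, μ s a = (1 - γ) * ρ0 s + γ * ∑ s' : S, ∑ a' : A, P s' a' s * μ s' a'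

open scoped RealInnerProductSpace

/-- The occupancy measure of `π` viewed as a point of Euclidean space `ℝ^{S×A}`. -/
def occE {S A : Type*} [Fintype S] [Fintype A] (γ : ℝ) (P : S → A → S → ℝ)
    (π : S → A → ℝ) (ρ0 : S → ℝ) : EuclideanSpace ℝ (S × A) :=
  WithLp.toLp 2 (fun p => occ γ P π ρ0 p.1 p.2)

/-- The Bellman flow polytope `M` inside Euclidean space `ℝ^{S×A}`. -/
def MflowE {S A : Type*} [Fintype S] [Fintype A] (γ : ℝ) (P : S → A → S → ℝ)
    (ρ0 : S → ℝ) : Set (EuclideanSpace ℝ (S × A)) :=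
  {μ | (∀ p, 0 ≤ μ p) ∧ (∑ p : S × A, μ p = 1) ∧
    ∀ s, ∑ a, μ (s, a) = (1 - γ) * ρ0 s + γ * ∑ s' : S, ∑ a' : A, P s' a' s * μ (s', a')}

section basic
variable {S A : Type*} [Fintype S] [Fintype A]
variable {γ : ℝ} {P : S → A → S → ℝ} {π : S → A → ℝ} {ρ0 : S → ℝ}

lemma saDist_nonneg (hP : IsKernel P) (hρ0 : IsDist ρ0) (hπ : IsPolicy π) :
    ∀ t s a, 0 ≤ saDist P π ρ0 t s a := by
  intro t
  induction t with
  | zero => intro s a; exact mul_nonneg (hρ0.1 s) ((hπ s).1 a)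
  | succ t ih =>
    intro s a
    refine mul_nonneg ((hπ s).1 a) ?_
    refine Finset.sum_nonneg fun s' _ => Finset.sum_nonneg fun a' _ => ?_
    exact mul_nonneg ((hP s' a').1 s) (ih s' a')

lemma sum_sum_saDist (hP : IsKernel P) (hρ0 : IsDist ρ0) (hπ : IsPolicy π) :
    ∀ t, ∑ s : S, ∑ a : A, saDist P π ρ0 t s a = 1 := by
  intro t
  induction t with
  | zero =>
    simp only [saDist, ← Finset.mul_sum]
    simp only [(fun s => (hπ s).2 : ∀ s, ∑ a, π s a = 1), mul_one, hρ0.2]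
  | succ t ih =>
    simp only [saDist, ← Finset.sum_mul]
    simp only [(fun s => (hπ s).2 : ∀ s, ∑ a, π s a = 1), one_mul]
    rw [Finset.sum_comm]
    have : ∀ s' : S, ∑ s : S, ∑ a' : A, P s' a' s * saDist P π ρ0 t s' a'
        = ∑ a' : A, saDist P π ρ0 t s' a' := by
      intro s'
      rw [Finset.sum_comm]
      refine Finset.sum_congr rfl fun a' _ => ?_
      rw [← Finset.sum_mul, (hP s' a').2, one_mul]
    simp only [this, ih]

/-- single-state mass is at most 1 -/
lemma sum_saDist_le_one (hP : IsKernel P) (hρ0 : IsDist ρ0) (hπ : IsPolicy π) (t : ℕ) (s : S) :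
    ∑ a : A, saDist P π ρ0 t s a ≤ 1 := by
  have h := sum_sum_saDist hP hρ0 hπ t
  calc ∑ a : A, saDist P π ρ0 t s a
      ≤ ∑ s : S, ∑ a : A, saDist P π ρ0 t s a := by
        exact Finset.single_le_sum
          (f := fun s' => ∑ a : A, saDist P π ρ0 t s' a)
          (fun s' _ => Finset.sum_nonneg fun a _ => saDist_nonneg hP hρ0 hπ t s' a)
          (Finset.mem_univ s)
    _ = 1 := h

lemma saDist_le_one (hP : IsKernel P) (hρ0 : IsDist ρ0) (hπ : IsPolicy π) (t : ℕ) (s : S)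
    (a : A) : saDist P π ρ0 t s a ≤ 1 := by
  refine le_trans ?_ (sum_saDist_le_one hP hρ0 hπ t s)
  exact Finset.single_le_sum (fun a' _ => saDist_nonneg hP hρ0 hπ t s a') (Finset.mem_univ a)

lemma summable_occ (hγ : γ ∈ Set.Ioo (0:ℝ) 1) (hP : IsKernel P) (hρ0 : IsDist ρ0)
    (hπ : IsPolicy π) (s : S) (a : A) :
    Summable (fun t : ℕ => γ ^ t * saDist P π ρ0 t s a) := by
  refine Summable.of_nonneg_of_le
    (fun t => mul_nonneg (pow_nonneg hγ.1.le t) (saDist_nonneg hP hρ0 hπ t s a))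
    (fun t => ?_) (summable_geometric_of_lt_one hγ.1.le hγ.2)
  calc γ ^ t * saDist P π ρ0 t s a ≤ γ ^ t * 1 := by
        exact mul_le_mul_of_nonneg_left (saDist_le_one hP hρ0 hπ t s a)
          (pow_nonneg hγ.1.le t)
    _ = γ ^ t := mul_one _

lemma summable_occ_state (hγ : γ ∈ Set.Ioo (0:ℝ) 1) (hP : IsKernel P) (hρ0 : IsDist ρ0)
    (hπ : IsPolicy π) (s : S) :
    Summable (fun t : ℕ => γ ^ t * ∑ a : A, saDist P π ρ0 t s a) := by
  refine Summable.of_nonneg_of_le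
    (fun t => mul_nonneg (pow_nonneg hγ.1.le t)
      (Finset.sum_nonneg fun a _ => saDist_nonneg hP hρ0 hπ t s a))
    (fun t => ?_) (summable_geometric_of_lt_one hγ.1.le hγ.2)
  calc γ ^ t * ∑ a : A, saDist P π ρ0 t s a ≤ γ ^ t * 1 := by
        exact mul_le_mul_of_nonneg_left (sum_saDist_le_one hP hρ0 hπ t s)
          (pow_nonneg hγ.1.le t)
    _ = γ ^ t := mul_one _

lemma occ_nonneg (hγ : γ ∈ Set.Ioo (0:ℝ) 1) (hP : IsKernel P) (hρ0 : IsDist ρ0)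
    (hπ : IsPolicy π) (s : S) (a : A) : 0 ≤ occ γ P π ρ0 s a := by
  refine mul_nonneg (by linarith [hγ.2]) (tsum_nonneg fun t => ?_)
  exact mul_nonneg (pow_nonneg hγ.1.le t) (saDist_nonneg hP hρ0 hπ t s a)

lemma saDist_factor (hπ : IsPolicy π) (t : ℕ) (s : S) (a : A) :
    saDist P π ρ0 t s a = π s a * ∑ b : A, saDist P π ρ0 t s b := by
  cases t with
  | zero =>
    simp only [saDist, ← Finset.mul_sum, (hπ s).2, mul_one]
    ring
  | succ t =>
    simp only [saDist, ← Finset.sum_mul, (hπ s).2, one_mul]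

lemma sum_occ (hγ : γ ∈ Set.Ioo (0:ℝ) 1) (hP : IsKernel P) (hρ0 : IsDist ρ0)
    (hπ : IsPolicy π) (s : S) :
    ∑ a : A, occ γ P π ρ0 s a
      = (1 - γ) * ∑' t : ℕ, γ ^ t * ∑ a : A, saDist P π ρ0 t s a := by
  unfold occ
  rw [← Finset.mul_sum]
  congr 1
  rw [← Summable.tsum_finsetSum (fun a _ => summable_occ hγ hP hρ0 hπ s a)]
  refine tsum_congr fun t => ?_
  rw [Finset.mul_sum]

lemma occ_factor (hγ : γ ∈ Set.Ioo (0:ℝ) 1) (hP : IsKernel P) (hρ0 : IsDist ρ0)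
    (hπ : IsPolicy π) (s : S) (a : A) :
    occ γ P π ρ0 s a = π s a * ∑ b : A, occ γ P π ρ0 s b := by
  have h1 : (fun t : ℕ => γ ^ t * saDist P π ρ0 t s a)
      = fun t => π s a * (γ ^ t * ∑ b : A, saDist P π ρ0 t s b) := by
    funext t; rw [saDist_factor hπ t s a]; ring
  rw [sum_occ hγ hP hρ0 hπ s]
  unfold occ
  rw [h1, Summable.tsum_mul_left _ (summable_occ_state hγ hP hρ0 hπ s)]
  ring


lemma occ_flow (hγ : γ ∈ Set.Ioo (0:ℝ) 1) (hP : IsKernel P) (hρ0 : IsDist ρ0)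
    (hπ : IsPolicy π) (s : S) :
    ∑ a : A, occ γ P π ρ0 s a
      = (1 - γ) * ρ0 s + γ * ∑ s' : S, ∑ a' : A, P s' a' s * occ γ P π ρ0 s' a' := by
  have hsum := summable_occ_state hγ hP hρ0 hπ (s := s)
  -- the inner transition sum at time t+1
  have key : ∀ t : ℕ, ∑ s' : S, ∑ a' : A, P s' a' s * saDist P π ρ0 t s' a'
      = ∑ a : A, saDist P π ρ0 (t + 1) s a := by
    intro t
    simp only [saDist, ← Finset.sum_mul, (hπ s).2, one_mul]
  -- rewrite the RHS double sum
  have hRHS : ∑ s' : S, ∑ a' : A, P s' a' s * occ γ P π ρ0 s' a'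
      = (1 - γ) * ∑' t : ℕ, γ ^ t * ∑ a : A, saDist P π ρ0 (t + 1) s a := by
    unfold occ
    have h1 : ∀ s' a', P s' a' s * ((1 - γ) * ∑' t : ℕ, γ ^ t * saDist P π ρ0 t s' a')
        = (1 - γ) * ∑' t : ℕ, P s' a' s * (γ ^ t * saDist P π ρ0 t s' a') := by
      intro s' a'
      rw [Summable.tsum_mul_left _ (summable_occ hγ hP hρ0 hπ s' a')]
      ring
    simp only [h1, ← Finset.mul_sum]
    congr 1
    have hsummand : ∀ (s' : S) (a' : A),
        Summable (fun t : ℕ => P s' a' s * (γ ^ t * saDist P π ρ0 t s' a')) := fun s' a' =>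
      (summable_occ hγ hP hρ0 hπ s' a').mul_left (P s' a' s)
    have hswap1 : ∀ s' : S, ∑ a' : A, ∑' t : ℕ, P s' a' s * (γ ^ t * saDist P π ρ0 t s' a')
        = ∑' t : ℕ, ∑ a' : A, P s' a' s * (γ ^ t * saDist P π ρ0 t s' a') := fun s' =>
      (Summable.tsum_finsetSum (fun a' _ => hsummand s' a')).symm
    simp only [hswap1]
    rw [← Summable.tsum_finsetSum (fun s' _ => summable_sum (fun a' _ => hsummand s' a'))]
    refine tsum_congr fun t => ?_
    rw [← key t, Finset.mul_sum]
    refine Finset.sum_congr rfl fun s' _ => ?_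
    rw [Finset.mul_sum]
    refine Finset.sum_congr rfl fun a' _ => ?_
    ring
  rw [sum_occ hγ hP hρ0 hπ s, hRHS]
  have hD0 : ∑ a : A, saDist P π ρ0 0 s a = ρ0 s := by
    simp only [saDist, ← Finset.mul_sum, (hπ s).2, mul_one]
  rw [Summable.tsum_eq_zero_add hsum]
  have hshift : ∑' t : ℕ, γ ^ (t + 1) * ∑ a : A, saDist P π ρ0 (t + 1) s a
      = γ * ∑' t : ℕ, γ ^ t * ∑ a : A, saDist P π ρ0 (t + 1) s a := by
    have hsum' : Summable (fun t : ℕ => γ ^ t * ∑ a : A, saDist P π ρ0 (t + 1) s a) := by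
      refine Summable.of_nonneg_of_le
        (fun t => mul_nonneg (pow_nonneg hγ.1.le t)
          (Finset.sum_nonneg fun a _ => saDist_nonneg hP hρ0 hπ (t + 1) s a))
        (fun t => ?_) (summable_geometric_of_lt_one hγ.1.le hγ.2)
      calc γ ^ t * ∑ a : A, saDist P π ρ0 (t + 1) s a ≤ γ ^ t * 1 :=
            mul_le_mul_of_nonneg_left (sum_saDist_le_one hP hρ0 hπ (t + 1) s)
              (pow_nonneg hγ.1.le t)
        _ = γ ^ t := mul_one _
    rw [← Summable.tsum_mul_left γ hsum']
    refine tsum_congr fun t => ?_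
    ring
  rw [hshift, hD0]
  ring

lemma occ_total (hγ : γ ∈ Set.Ioo (0:ℝ) 1) (hP : IsKernel P) (hρ0 : IsDist ρ0)
    (hπ : IsPolicy π) :
    ∑ p : S × A, occ γ P π ρ0 p.1 p.2 = 1 := by
  rw [Fintype.sum_prod_type]
  have h1 : ∀ s : S, ∑ a : A, occ γ P π ρ0 s a
      = (1 - γ) * ∑' t : ℕ, γ ^ t * ∑ a : A, saDist P π ρ0 t s a :=
    sum_occ hγ hP hρ0 hπ
  simp only [h1, ← Finset.mul_sum]
  rw [← Summable.tsum_finsetSum (fun s _ => summable_occ_state hγ hP hρ0 hπ s)]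
  have : ∀ t : ℕ, ∑ s : S, γ ^ t * ∑ a : A, saDist P π ρ0 t s a = γ ^ t := by
    intro t
    rw [← Finset.mul_sum, sum_sum_saDist hP hρ0 hπ t, mul_one]
  rw [tsum_congr this, tsum_geometric_of_lt_one hγ.1.le hγ.2,
    mul_inv_cancel₀ (ne_of_gt (by linarith [hγ.2] : (0:ℝ) < 1 - γ))]

end basic

section flow
variable {S A : Type*} [Fintype S] [Fintype A]
variable {γ : ℝ} {P : S → A → S → ℝ} {ρ0 : S → ℝ}

lemma occE_mem_MflowE (hγ : γ ∈ Set.Ioo (0:ℝ) 1) (hP : IsKernel P) (hρ0 : IsDist ρ0)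
    {π : S → A → ℝ} (hπ : IsPolicy π) : occE γ P π ρ0 ∈ MflowE γ P ρ0 := by
  refine ⟨fun p => occ_nonneg hγ hP hρ0 hπ p.1 p.2, occ_total hγ hP hρ0 hπ, fun s => ?_⟩
  exact occ_flow hγ hP hρ0 hπ s

lemma MflowE_subset_stdSimplex {μ : EuclideanSpace ℝ (S × A)} (hμ : μ ∈ MflowE γ P ρ0) :
    WithLp.ofLp μ ∈ stdSimplex ℝ (S × A) :=
  ⟨hμ.1, hμ.2.1⟩

/-- Uniqueness of the solution of the state-level Bellman flow equation. -/
lemma flow_state_unique {γ : ℝ} (hγ : γ ∈ Set.Ioo (0:ℝ) 1)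
    {K : S → S → ℝ} (hKnn : ∀ s' s, 0 ≤ K s' s) (hK1 : ∀ s', ∑ s, K s' s = 1)
    {ρ0 : S → ℝ} {ν w : S → ℝ}
    (hν : ∀ s, ν s = (1 - γ) * ρ0 s + γ * ∑ s', K s' s * ν s')
    (hw : ∀ s, w s = (1 - γ) * ρ0 s + γ * ∑ s', K s' s * w s') : ν = w := by
  have hδ : ∀ s, ν s - w s = γ * ∑ s', K s' s * (ν s' - w s') := by
    intro s
    have h : ∑ s', K s' s * (ν s' - w s')
        = ∑ s', K s' s * ν s' - ∑ s', K s' s * w s' := by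
      simp [mul_sub, Finset.sum_sub_distrib]
    rw [h, hν s, hw s]; ring
  have habs : ∑ s, |ν s - w s| ≤ γ * ∑ s, |ν s - w s| := by
    calc ∑ s, |ν s - w s| = ∑ s, |γ * ∑ s', K s' s * (ν s' - w s')| :=
          Finset.sum_congr rfl fun s _ => by rw [hδ s]
      _ ≤ ∑ s, γ * ∑ s', K s' s * |ν s' - w s'| := by
          refine Finset.sum_le_sum fun s _ => ?_
          rw [abs_mul, abs_of_nonneg hγ.1.le]
          refine mul_le_mul_of_nonneg_left ?_ hγ.1.le
          refine (Finset.abs_sum_le_sum_abs _ _).trans ?_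
          refine Finset.sum_le_sum fun s' _ => ?_
          rw [abs_mul, abs_of_nonneg (hKnn s' s)]
      _ = γ * ∑ s', (∑ s, K s' s) * |ν s' - w s'| := by
          rw [← Finset.mul_sum, Finset.sum_comm]
          congr 1
          exact Finset.sum_congr rfl fun s' _ => (Finset.sum_mul _ _ _).symm
      _ = γ * ∑ s', |ν s' - w s'| := by simp [hK1]
  have hnn : 0 ≤ ∑ s, |ν s - w s| := Finset.sum_nonneg fun s _ => abs_nonneg _
  have hz : ∑ s, |ν s - w s| = 0 := by nlinarith [hγ.2]
  funext s
  have h0 := (Finset.sum_eq_zero_iff_of_nonneg (fun s _ => abs_nonneg _)).1 hz s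
    (Finset.mem_univ s)
  have := abs_eq_zero.1 h0
  linarith

/-- Every element of the Bellman flow polytope is the occupancy measure of a policy. -/
lemma MflowE_eq_occ [Nonempty A] (hγ : γ ∈ Set.Ioo (0:ℝ) 1) (hP : IsKernel P)
    (hρ0 : IsDist ρ0) {μ : EuclideanSpace ℝ (S × A)} (hμ : μ ∈ MflowE γ P ρ0) :
    ∃ π' : S → A → ℝ, IsPolicy π' ∧ occE γ P π' ρ0 = μ := by
  classical
  obtain ⟨hpos, _hsum1, hflow⟩ := hμ
  set ν : S → ℝ := fun s => ∑ a, μ (s, a) with hνdef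
  have hνnn : ∀ s, 0 ≤ ν s := fun s => Finset.sum_nonneg fun a _ => hpos (s, a)
  set π' : S → A → ℝ :=
    fun s a => if 0 < ν s then μ (s, a) / ν s else (Fintype.card A : ℝ)⁻¹ with hπ'def
  have hπ' : IsPolicy π' := by
    intro s
    constructor
    · intro a
      by_cases h : 0 < ν s
      · simp only [hπ'def, if_pos h]
        exact div_nonneg (hpos (s, a)) (hνnn s)
      · simp only [hπ'def, if_neg h]
        positivity
    · by_cases h : 0 < ν s
      · simp only [hπ'def, if_pos h, ← Finset.sum_div]
        exact div_self (ne_of_gt h)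
      · simp only [hπ'def, if_neg h, Finset.sum_const, Finset.card_univ, nsmul_eq_mul]
        rw [mul_inv_cancel₀]
        exact_mod_cast Fintype.card_ne_zero
  have hfac : ∀ s a, μ (s, a) = π' s a * ν s := by
    intro s a
    by_cases h : 0 < ν s
    · simp only [hπ'def, if_pos h]
      rw [div_mul_cancel₀ _ (ne_of_gt h)]
    · have hν0 : ν s = 0 := le_antisymm (not_lt.1 h) (hνnn s)
      have hμ0 : μ (s, a) = 0 :=
        (Finset.sum_eq_zero_iff_of_nonneg (fun a _ => hpos (s, a))).1 hν0 a (Finset.mem_univ a)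
      rw [hμ0, hν0, mul_zero]
  set K : S → S → ℝ := fun s' s => ∑ a' : A, P s' a' s * π' s' a' with hKdef
  have hKnn : ∀ s' s, 0 ≤ K s' s := fun s' s =>
    Finset.sum_nonneg fun a' _ => mul_nonneg ((hP s' a').1 s) ((hπ' s').1 a')
  have hK1 : ∀ s', ∑ s, K s' s = 1 := by
    intro s'
    simp only [hKdef]
    rw [Finset.sum_comm]
    have : ∀ a' : A, ∑ s : S, P s' a' s * π' s' a' = π' s' a' := by
      intro a'
      rw [← Finset.sum_mul, (hP s' a').2, one_mul]
    simp only [this, (hπ' s').2]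
  have hνeq : ∀ s, ν s = (1 - γ) * ρ0 s + γ * ∑ s', K s' s * ν s' := by
    intro s
    rw [show ν s = ∑ a, μ (s, a) from rfl, hflow s]
    congr 2
    refine Finset.sum_congr rfl fun s' _ => ?_
    rw [hKdef]
    simp only [Finset.sum_mul]
    refine Finset.sum_congr rfl fun a' _ => ?_
    rw [hfac s' a']; ring
  have hweq : ∀ s, (∑ a, occ γ P π' ρ0 s a)
      = (1 - γ) * ρ0 s + γ * ∑ s', K s' s * ∑ b, occ γ P π' ρ0 s' b := by
    intro s
    rw [occ_flow hγ hP hρ0 hπ' s]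
    congr 2
    refine Finset.sum_congr rfl fun s' _ => ?_
    rw [hKdef]
    simp only [Finset.sum_mul]
    refine Finset.sum_congr rfl fun a' _ => ?_
    rw [occ_factor hγ hP hρ0 hπ' s' a']; ring
  have huniq : ν = fun s => ∑ b, occ γ P π' ρ0 s b :=
    flow_state_unique hγ hKnn hK1 hνeq hweq
  refine ⟨π', hπ', ?_⟩
  refine PiLp.ext fun p => ?_
  show occ γ P π' ρ0 p.1 p.2 = μ p
  rw [occ_factor hγ hP hρ0 hπ' p.1 p.2, ← congrFun huniq p.1]
  exact (hfac p.1 p.2).symm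

end flow

section grad
open InnerProductSpace
variable {E : Type*} [NormedAddCommGroup E] [InnerProductSpace ℝ E] [CompleteSpace E]

lemma hasDerivAt_line {F : E → ℝ} {g x : E} (h : HasGradientAt F g x) (v : E) :
    HasDerivAt (fun t : ℝ => F (x + t • v)) ⟪g, v⟫ 0 := by
  have line : HasDerivAt (fun t : ℝ => x + t • v) v 0 := by
    simpa using ((hasDerivAt_id (0:ℝ)).smul_const v).const_add x
  have h2 : HasFDerivAt F ((toDual ℝ E) g) (x + (0:ℝ) • v) := by simpa using h.hasFDerivAt
  have := h2.comp_hasDerivAt 0 line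
  simp at this
  exact this

lemma tendsto_slope_right {φ : ℝ → ℝ} {d : ℝ} (h : HasDerivAt φ d 0) :
    Filter.Tendsto (fun t => (φ t - φ 0) / t) (nhdsWithin 0 (Set.Ioi 0)) (nhds d) := by
  have ht : Filter.Tendsto (slope φ 0) (nhdsWithin 0 (Set.Ioi 0)) (nhds d) :=
    (hasDerivAt_iff_tendsto_slope.1 h).mono_left
      (nhdsWithin_mono 0 (fun x hx => by simpa using (ne_of_gt hx)))
  refine ht.congr fun t => ?_
  rw [slope_def_field]
  simp [div_eq_mul_inv]

lemma deriv_le_of_slope_le {φ : ℝ → ℝ} {d c : ℝ} (h : HasDerivAt φ d 0)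
    (hb : ∀ t ∈ Set.Ioc (0:ℝ) 1, (φ t - φ 0) / t ≤ c) : d ≤ c := by
  refine le_of_tendsto (tendsto_slope_right h) ?_
  filter_upwards [Ioc_mem_nhdsGT_of_mem (Set.left_mem_Ico.2 one_pos)] with t htt
  exact hb t htt

lemma deriv_ge_of_slope_ge {φ : ℝ → ℝ} {d c : ℝ} (h : HasDerivAt φ d 0)
    (hb : ∀ t ∈ Set.Ioc (0:ℝ) 1, c ≤ (φ t - φ 0) / t) : c ≤ d := by
  refine ge_of_tendsto (tendsto_slope_right h) ?_
  filter_upwards [Ioc_mem_nhdsGT_of_mem (Set.left_mem_Ico.2 one_pos)] with t htt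
  exact hb t htt

lemma combo_eq (x y : E) (t : ℝ) : (1 - t) • x + t • y = x + t • (y - x) := by
  rw [smul_sub, sub_smul, one_smul]
  abel

lemma concave_grad_ineq {D : Set E} {F : E → ℝ} (hF : ConcaveOn ℝ D F) {x g : E}
    (hx : x ∈ D) (hg : HasGradientAt F g x) {y : E} (hy : y ∈ D) :
    F y ≤ F x + ⟪g, y - x⟫ := by
  have hd := hasDerivAt_line hg (y - x)
  have hb : ∀ t ∈ Set.Ioc (0:ℝ) 1, F y - F x ≤ (F (x + t • (y - x)) - F (x + (0:ℝ) • (y - x))) / t := by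
    intro t ht
    have hc := hF.2 hx hy (by linarith [ht.2] : (0:ℝ) ≤ 1 - t) ht.1.le (by ring)
    rw [combo_eq x y t] at hc
    rw [show x + (0:ℝ) • (y - x) = x by simp]
    rw [le_div_iff₀ ht.1]
    simp only [smul_eq_mul] at hc
    nlinarith [hc]
  have := deriv_ge_of_slope_ge hd hb
  linarith

end grad

/-- CURL maximizers coincide with Nash equilibria of the potential MFG with
reward `R(·,μ) = ∇F(μ)`: a policy `π` maximizes `F(μ_π)` over all policies iff
`J(π', μ_π) = ⟨μ_{π'}, ∇F(μ_π)⟩ ≤ J(π, μ_π)` for every policy `π'`, i.e. the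
exploitability of `π` is zero. -/
theorem stmt7 {S A : Type*} [Fintype S] [Fintype A] [Nonempty S] [Nonempty A]
    (γ : ℝ) (hγ : γ ∈ Set.Ioo (0 : ℝ) 1)
    (P : S → A → S → ℝ) (hP : IsKernel P)
    (ρ0 : S → ℝ) (hρ0 : IsDist ρ0)
    (F : EuclideanSpace ℝ (S × A) → ℝ)
    (R : EuclideanSpace ℝ (S × A) → EuclideanSpace ℝ (S × A))
    (hF : ConcaveOn ℝ (WithLp.ofLp ⁻¹' stdSimplex ℝ (S × A)) F)
    (hgrad : ∀ μ ∈ stdSimplex ℝ (S × A), HasGradientAt F (R (WithLp.toLp 2 μ)) (WithLp.toLp 2 μ))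
    (π : S → A → ℝ) (hπ : IsPolicy π) :
    (∀ π' : S → A → ℝ, IsPolicy π' → F (occE γ P π' ρ0) ≤ F (occE γ P π ρ0)) ↔
    (∀ π' : S → A → ℝ, IsPolicy π' →
      ⟪occE γ P π' ρ0, R (occE γ P π ρ0)⟫ ≤ ⟪occE γ P π ρ0, R (occE γ P π ρ0)⟫) := by
  set μE : EuclideanSpace ℝ (S × A) := occE γ P π ρ0 with hμE
  have hμM : μE ∈ MflowE γ P ρ0 := occE_mem_MflowE hγ hP hρ0 hπ
  have hμΔ : WithLp.ofLp μE ∈ stdSimplex ℝ (S × A) := MflowE_subset_stdSimplex hμM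
  have hg : HasGradientAt F (R μE) μE := hgrad _ hμΔ
  constructor
  · intro hmax π' hπ'
    set μ' : EuclideanSpace ℝ (S × A) := occE γ P π' ρ0 with hμ'
    have hμ'M : μ' ∈ MflowE γ P ρ0 := occE_mem_MflowE hγ hP hρ0 hπ'
    have hd := hasDerivAt_line hg (μ' - μE)
    have hb : ∀ t ∈ Set.Ioc (0:ℝ) 1,
        (F (μE + t • (μ' - μE)) - F (μE + (0:ℝ) • (μ' - μE))) / t ≤ 0 := by
      intro t ht
      have happ : ∀ p, (μE + t • (μ' - μE)) p = μE p + t * (μ' p - μE p) := fun p => rfl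
      obtain ⟨h1, h2, h3⟩ := hμM
      obtain ⟨h1', h2', h3'⟩ := hμ'M
      have hmem : μE + t • (μ' - μE) ∈ MflowE γ P ρ0 := by
        refine ⟨fun p => ?_, ?_, fun s => ?_⟩
        · rw [happ p]; nlinarith [h1 p, h1' p, ht.1.le, ht.2]
        · simp only [happ]
          rw [Finset.sum_add_distrib, ← Finset.mul_sum, Finset.sum_sub_distrib, h2, h2']
          ring
        · have hsplit : ∑ s' : S, ∑ a' : A,
              P s' a' s * (μE (s', a') + t * (μ' (s', a') - μE (s', a')))
              = (∑ s' : S, ∑ a' : A, P s' a' s * μE (s', a'))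
                + t * (∑ s' : S, ∑ a' : A, P s' a' s * μ' (s', a'))
                - t * (∑ s' : S, ∑ a' : A, P s' a' s * μE (s', a')) := by
            have e1 : ∀ (s' : S) (a' : A),
                P s' a' s * (μE (s', a') + t * (μ' (s', a') - μE (s', a')))
                = P s' a' s * μE (s', a') + t * (P s' a' s * μ' (s', a'))
                  - t * (P s' a' s * μE (s', a')) := fun s' a' => by ring
            simp only [e1, Finset.sum_add_distrib, Finset.sum_sub_distrib, ← Finset.mul_sum]
          have hL : ∑ a, (μE + t • (μ' - μE)) (s, a)
              = (∑ a, μE (s, a)) + t * ((∑ a, μ' (s, a)) - ∑ a, μE (s, a)) := by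
            simp only [happ]
            rw [Finset.sum_add_distrib, ← Finset.mul_sum, Finset.sum_sub_distrib]
          rw [hL]
          simp only [happ]
          rw [hsplit, h3 s, h3' s]
          ring
      obtain ⟨πt, hπt, hocc⟩ := MflowE_eq_occ hγ hP hρ0 hmem
      have hle := hmax πt hπt
      rw [hocc] at hle
      rw [show μE + (0:ℝ) • (μ' - μE) = μE by simp]
      exact div_nonpos_of_nonpos_of_nonneg (by linarith) ht.1.le
    have hd0 : ⟪R μE, μ' - μE⟫ ≤ 0 := deriv_le_of_slope_le hd hb
    rw [inner_sub_right] at hd0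
    have e1 : ⟪R μE, μ'⟫ = ⟪μ', R μE⟫ := real_inner_comm _ _
    have e2 : ⟪R μE, μE⟫ = ⟪μE, R μE⟫ := real_inner_comm _ _
    linarith
  · intro hN π' hπ'
    have hμ'Δ : WithLp.ofLp (occE γ P π' ρ0) ∈ stdSimplex ℝ (S × A) :=
      MflowE_subset_stdSimplex (occE_mem_MflowE hγ hP hρ0 hπ')
    have h := concave_grad_ineq hF hμΔ hg hμ'Δ
    rw [inner_sub_right] at h
    have e1 : ⟪R μE, occE γ P π' ρ0⟫ = ⟪occE γ P π' ρ0, R μE⟫ := real_inner_comm _ _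
    have e2 : ⟪R μE, μE⟫ = ⟪μE, R μE⟫ := real_inner_comm _ _
    have := hN π' hπ'
    linarith
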